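/- Let T: X → X and S: Y → Y be homeomorphisms of compact metric spaces, π: X → Y a continuous surjection with π∘T = S∘π, and ν an ergodic S-invariant Borel probability measure on Y such that |π⁻¹(y)| = d for ν-a.e. y, where d ∈ ℕ is finite. Then the set function μ defined on Borel sets A ⊆ X by μ(A) = (1/d) ∫_Y |π⁻¹(y) ∩ A| dν(y) is a well-defined T-invariant Borel probability measure on X with πμ = ν, its disintegration over ν assigns to ν-a.e. y the uniform distribution on the d points of π⁻¹(y), and μ is the unique T-invariant lift of ν whose disintegration is ν-a.e. the uniform distribution on the fiber. -/

import Mathlib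

open MeasureTheory Set Filter
open scoped ENNReal

/-- `μ` has a disintegration over `ν` (along `π`) which is ν-a.e. the uniform distribution
on the `d`-point fiber `π⁻¹(y)`. -/
def HasUniformFiberDisintegration {X Y : Type*} [MeasurableSpace X] [MeasurableSpace Y]
    (π : X → Y) (ν : Measure Y) (d : ℕ) (μ : Measure X) : Prop :=
  ∃ K : Y → Measure X,
    (∀ s : Set X, MeasurableSet s →
      Measurable (fun y => K y s) ∧ μ s = ∫⁻ y, K y s ∂ν) ∧
    ∀ᵐ y ∂ν, K y (π ⁻¹' {y}) = 1 ∧ ∀ x, π x = y → K y {x} = (d : ℝ≥0∞)⁻¹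

open scoped Classical in
lemma localInv {X Y : Type*} [MetricSpace X] [CompactSpace X]
    [MetricSpace Y] [CompactSpace Y]
    [MeasurableSpace X] [BorelSpace X] [MeasurableSpace Y] [BorelSpace Y]
    (π : X → Y) (hπ : Measurable π) (B : Set X) (hB : MeasurableSet B)
    (hinj : Set.InjOn π B) (x₀ : X) :
    ∃ g : Y → X, Measurable g ∧ ∀ y ∈ π '' B, g y ∈ B ∧ π (g y) = y := by
  rcases B.eq_empty_or_nonempty with hBe | hBn
  · exact ⟨fun _ => x₀, measurable_const, by simp [hBe]⟩
  haveI : Nonempty B := hBn.to_subtype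
  haveI := hB.standardBorel
  set h : B → Y := fun b => π b with hh
  have hmeas : Measurable h := hπ.comp measurable_subtype_coe
  have hinj' : Function.Injective h := fun a b hab => Subtype.ext (hinj a.2 b.2 hab)
  have hemb : MeasurableEmbedding h := hmeas.measurableEmbedding hinj'
  refine ⟨fun y => if hy : ∃ b : B, h b = y then (Classical.choose hy).1 else x₀, ?_, ?_⟩
  · intro t ht
    have key : (fun y => if hy : ∃ b : B, h b = y then (Classical.choose hy).1 else x₀) ⁻¹' t
        = (h '' ((↑) ⁻¹' t)) ∪ ((Set.range h)ᶜ ∩ {y | x₀ ∈ t}) := by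
      ext y
      by_cases hy : ∃ b : B, h b = y
      · simp only [mem_preimage, dif_pos hy, mem_union, mem_image, mem_inter_iff,
          mem_compl_iff, mem_range, mem_setOf_eq]
        constructor
        · intro hct
          exact Or.inl ⟨Classical.choose hy, hct, Classical.choose_spec hy⟩
        · rintro (⟨b, hbt, hby⟩ | ⟨hnr, _⟩)
          · have : b = Classical.choose hy := hinj' (hby.trans (Classical.choose_spec hy).symm)
            rwa [← this]
          · exact absurd hy hnr
      · simp only [mem_preimage, dif_neg hy, mem_union, mem_image, mem_inter_iff,
          mem_compl_iff, mem_range, mem_setOf_eq]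
        constructor
        · intro hx; exact Or.inr ⟨hy, hx⟩
        · rintro (⟨b, _, hby⟩ | ⟨_, hx⟩)
          · exact absurd ⟨b, hby⟩ hy
          · exact hx
    rw [key]
    refine ((hemb.measurableSet_image' (measurable_subtype_coe ht)).union
      (((hemb.measurableSet_range).compl).inter ?_))
    by_cases hx : x₀ ∈ t
    · simp [hx]
    · simp [hx]
  · rintro y ⟨b, hbB, rfl⟩
    have hy : ∃ b' : B, h b' = π b := ⟨⟨b, hbB⟩, rfl⟩
    simp only []
    rw [dif_pos hy]
    exact ⟨(Classical.choose hy).2, Classical.choose_spec hy⟩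

open scoped Classical in
lemma exists_sections {X Y : Type*} [MetricSpace X] [CompactSpace X]
    [MetricSpace Y] [CompactSpace Y]
    [MeasurableSpace X] [BorelSpace X] [MeasurableSpace Y] [BorelSpace Y]
    [Nonempty X]
    (π : X → Y) (hπc : Continuous π)
    (ν : Measure Y) (d : ℕ) (hd : 0 < d)
    (hfib : ∀ᵐ y ∂ν, (π ⁻¹' {y}).encard = d) :
    ∃ (G : Set Y) (f : Fin d → Y → X), MeasurableSet G ∧ ν Gᶜ = 0 ∧
      (∀ i, Measurable (f i)) ∧
      ∀ y ∈ G, (π ⁻¹' {y}).encard = d ∧ (∀ i, π (f i y) = y) ∧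
        Function.Injective (fun i => f i y) ∧ π ⁻¹' {y} = Set.range fun i => f i y := by
  have hπm : Measurable π := hπc.measurable
  -- conull measurable set where fibers have exactly d points
  obtain ⟨N, hNsub, hNm, hNnull⟩ :=
    exists_measurable_superset_of_null (ae_iff.1 hfib)
  set G₀ : Set Y := Nᶜ with hG₀
  have hG₀m : MeasurableSet G₀ := hNm.compl
  have hG₀fib : ∀ y ∈ G₀, (π ⁻¹' {y}).encard = d := by
    intro y hy
    by_contra hne
    exact hy (hNsub hne)
  -- dense sequence
  obtain ⟨c, hc⟩ : ∃ c : ℕ → X, DenseRange c :=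
    ⟨TopologicalSpace.denseSeq X, TopologicalSpace.denseRange_denseSeq X⟩
  -- patterns
  set Q := (Fin d → ℕ × ℚ) with hQ
  set CB : Q → Fin d → Set X := fun q i => Metric.closedBall (c (q i).1) ((q i).2 : ℝ) with hCB
  set OB : Q → Fin d → Set X := fun q i => Metric.ball (c (q i).1) ((q i).2 : ℝ) with hOB
  set Good : Q → Prop := fun q => Pairwise (Function.onFun Disjoint (CB q)) with hGood
  set YP : Q → Set Y := fun q => (π '' (⋃ i, OB q i)ᶜ)ᶜ ∩ ⋂ i, π '' (CB q i) with hYP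
  have hYPm : ∀ q, MeasurableSet (YP q) := by
    intro q
    refine MeasurableSet.inter ?_ (MeasurableSet.iInter fun i => ?_)
    · exact (((((isOpen_iUnion fun i => Metric.isOpen_ball).isClosed_compl).isCompact).image
        hπc).isClosed).measurableSet.compl
    · exact (((Metric.isClosed_closedBall).isCompact).image hπc).isClosed.measurableSet
  -- coverage
  have hcov : ∀ y ∈ G₀, ∃ q, Good q ∧ y ∈ YP q := by
    intro y hy
    have hfd : (π ⁻¹' {y}).encard = d := hG₀fib y hy
    have hfin : (π ⁻¹' {y}).Finite := Set.finite_of_encard_eq_coe hfd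
    haveI := hfin.fintype
    have hcard : Fintype.card (π ⁻¹' {y}) = d := by
      have h1 : ((π ⁻¹' {y}).toFinset.card : ℕ∞) = (d : ℕ∞) := by
        rw [← Set.encard_eq_coe_toFinset_card]; exact hfd
      have h2 : (π ⁻¹' {y}).toFinset.card = d := by exact_mod_cast h1
      rw [← Set.toFinset_card]; exact h2
    obtain ⟨e⟩ : Nonempty (π ⁻¹' {y} ≃ Fin d) := ⟨Fintype.equivFinOfCardEq hcard⟩
    set w : Fin d → X := fun i => (e.symm i : X) with hw
    have hwinj : Function.Injective w := fun a b hab => by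
      have := e.symm.injective (Subtype.ext hab); exact this
    have hwmem : ∀ i, w i ∈ π ⁻¹' {y} := fun i => (e.symm i).2
    have hwrange : Set.range w = π ⁻¹' {y} := by
      apply hfin.eq_of_subset_of_encard_le' (by rintro x ⟨i, rfl⟩; exact hwmem i)
      rw [hfd]
      have : (Set.range w).encard = (Set.univ : Set (Fin d)).encard := by
        rw [← Set.image_univ]
        exact hwinj.encard_image _
      rw [this, Set.encard_univ]
      simp
    -- minimal distance
    obtain ⟨δ, hδpos, hδ⟩ : ∃ δ : ℝ, 0 < δ ∧ ∀ i j, i ≠ j → δ ≤ dist (w i) (w j) := by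
      set F := Finset.image (fun p : Fin d × Fin d => dist (w p.1) (w p.2)) Finset.univ.offDiag
        with hF
      by_cases hFn : F.Nonempty
      · refine ⟨F.min' hFn, ?_, ?_⟩
        · obtain ⟨p, hp, hpe⟩ := Finset.mem_image.1 (F.min'_mem hFn)
          rw [← hpe]
          have hne : p.1 ≠ p.2 := (Finset.mem_offDiag.1 hp).2.2
          exact dist_pos.2 fun hcon => hne (hwinj hcon)
        · intro i j hij
          exact F.min'_le _ (Finset.mem_image.2 ⟨(i, j), Finset.mem_offDiag.2
            ⟨Finset.mem_univ _, Finset.mem_univ _, hij⟩, rfl⟩)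
      · refine ⟨1, one_pos, fun i j hij => absurd ?_ hFn⟩
        exact ⟨_, Finset.mem_image.2 ⟨(i, j), Finset.mem_offDiag.2
          ⟨Finset.mem_univ _, Finset.mem_univ _, hij⟩, rfl⟩⟩
    obtain ⟨r, hr0, hr4⟩ := exists_rat_btwn (by positivity : (0:ℝ) < δ/4)
    have hr0' : (0:ℝ) < r := hr0
    choose n hn using fun i => Metric.denseRange_iff.1 hc (w i) ((r:ℝ)/2) (by positivity)
    refine ⟨fun i => (n i, r), ?_, ?_⟩
    · intro i j hij
      rw [Function.onFun, Set.disjoint_left]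
      intro z hzi hzj
      simp only [hCB, Metric.mem_closedBall] at hzi hzj
      have h1 : dist (c (n i)) (c (n j)) ≤ 2 * r := by
        calc dist (c (n i)) (c (n j)) ≤ dist z (c (n i)) + dist z (c (n j)) :=
          dist_triangle_left _ _ _
        _ ≤ 2 * r := by linarith
      have h2 : δ ≤ dist (w i) (w j) := hδ i j hij
      have h3 : dist (w i) (w j) ≤ dist (w i) (c (n i)) + dist (c (n i)) (c (n j))
          + dist (c (n j)) (w j) := dist_triangle4 _ _ _ _
      have h4 := hn i
      have h5 := hn j
      rw [dist_comm (c (n j)) (w j)] at h3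
      linarith
    · constructor
      · intro hmem
        obtain ⟨x, hxnot, hπx⟩ := hmem
        have : x ∈ π ⁻¹' {y} := hπx
        rw [← hwrange] at this
        obtain ⟨i, rfl⟩ := this
        apply hxnot
        refine Set.mem_iUnion.2 ⟨i, ?_⟩
        simp only [hOB, Metric.mem_ball]
        calc dist (w i) (c (n i)) < r/2 := hn i
        _ < r := by linarith
      · refine Set.mem_iInter.2 fun i => ⟨w i, ?_, hwmem i⟩
        simp only [hCB, Metric.mem_closedBall]
        exact le_of_lt (lt_of_lt_of_le (hn i) (by linarith))
  -- in a good pattern piece, each closed ball meets the fiber in at most one point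
  have hsingle : ∀ q, Good q → ∀ y, y ∈ G₀ → y ∈ YP q → ∀ i, ∀ x₁ x₂,
      π x₁ = y → x₁ ∈ CB q i → π x₂ = y → x₂ ∈ CB q i → x₁ = x₂ := by
    intro q hq y hy hyp i x₁ x₂ h1 h1' h2 h2'
    have hfd : (π ⁻¹' {y}).encard = d := hG₀fib y hy
    have hfin : (π ⁻¹' {y}).Finite := Set.finite_of_encard_eq_coe hfd
    choose z hzc hzf using fun j => Set.mem_iInter.1 hyp.2 j
    have hzinj : Function.Injective z := by
      intro a b hab
      by_contra hne
      exact Set.disjoint_left.1 (hq hne) (hzc a) (hab ▸ hzc b)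
    have hzrange : Set.range z = π ⁻¹' {y} := by
      apply hfin.eq_of_subset_of_encard_le' (by rintro x ⟨j, rfl⟩; exact hzf j)
      rw [hfd]
      have : (Set.range z).encard = (Set.univ : Set (Fin d)).encard := by
        rw [← Set.image_univ]; exact hzinj.encard_image _
      rw [this, Set.encard_univ]; simp
    have hx₁ : x₁ ∈ Set.range z := hzrange ▸ (h1 : π x₁ = y)
    have hx₂ : x₂ ∈ Set.range z := hzrange ▸ (h2 : π x₂ = y)
    obtain ⟨j₁, rfl⟩ := hx₁
    obtain ⟨j₂, rfl⟩ := hx₂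
    have hj₁ : j₁ = i := by
      by_contra hne
      exact Set.disjoint_left.1 (hq hne) (hzc j₁) h1'
    have hj₂ : j₂ = i := by
      by_contra hne
      exact Set.disjoint_left.1 (hq hne) (hzc j₂) h2'
    rw [hj₁, hj₂]
  -- enumerate patterns
  haveI : Nonempty Q := ⟨fun _ => (0, 0)⟩
  obtain ⟨e, he⟩ := exists_surjective_nat Q
  set F : ℕ → Set Y := fun m => if Good (e m) then G₀ ∩ YP (e m) else ∅ with hF
  have hFm : ∀ m, MeasurableSet (F m) := by
    intro m
    by_cases h : Good (e m) <;> simp only [hF, h, if_true, if_false]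
    · exact hG₀m.inter (hYPm _)
    · exact MeasurableSet.empty
  have hFcov : ∀ y ∈ G₀, ∃ m, y ∈ F m := by
    intro y hy
    obtain ⟨q, hq, hyq⟩ := hcov y hy
    obtain ⟨m, rfl⟩ := he q
    exact ⟨m, by simp only [hF, if_pos hq]; exact ⟨hy, hyq⟩⟩
  -- local inverses on pieces
  set B : ℕ → Fin d → Set X := fun m i => CB (e m) i ∩ π ⁻¹' (F m) with hB
  have hBmeas : ∀ m i, MeasurableSet (B m i) :=
    fun m i => (Metric.isClosed_closedBall.measurableSet).inter ((hFm m).preimage hπm)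
  have hBinj : ∀ m i, Set.InjOn π (B m i) := by
    intro m i x₁ hx₁ x₂ hx₂ hxx
    have hy : π x₁ ∈ F m := hx₁.2
    have hGm : Good (e m) ∧ π x₁ ∈ G₀ ∩ YP (e m) := by
      by_cases h : Good (e m)
      · refine ⟨h, ?_⟩; simpa only [hF, if_pos h] using hy
      · exfalso; simp only [hF, if_neg h] at hy; exact hy
    exact hsingle (e m) hGm.1 (π x₁) hGm.2.1 hGm.2.2 i x₁ x₂ rfl hx₁.1 hxx.symm hx₂.1
  choose g hgm hg using fun m i => localInv π hπm (B m i) (hBmeas m i) (hBinj m i)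
    (Classical.arbitrary X)
  have hsurjB : ∀ m, ∀ y ∈ F m, ∀ i, y ∈ π '' (B m i) := by
    intro m y hy i
    have hGm : Good (e m) ∧ y ∈ G₀ ∩ YP (e m) := by
      by_cases h : Good (e m)
      · refine ⟨h, ?_⟩; simpa only [hF, if_pos h] using hy
      · exfalso; simp only [hF, if_neg h] at hy; exact hy
    obtain ⟨x, hxc, hxf⟩ := Set.mem_iInter.1 hGm.2.2.2 i
    exact ⟨x, ⟨hxc, by rwa [Set.mem_preimage, hxf]⟩, hxf⟩
  -- glue with Nat.find
  set p : ℕ → Y → Prop := fun m y => y ∈ F m ∨ (m = 0 ∧ ∀ k, y ∉ F k) with hp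
  have htot : ∀ y, ∃ m, p m y := by
    intro y
    by_cases h : ∃ k, y ∈ F k
    · obtain ⟨k, hk⟩ := h; exact ⟨k, Or.inl hk⟩
    · exact ⟨0, Or.inr ⟨rfl, fun k hk => h ⟨k, hk⟩⟩⟩
  have hpm : ∀ m, MeasurableSet {y | p m y} := by
    intro m
    have : {y | p m y} = F m ∪ (if m = 0 then (⋃ k, F k)ᶜ else ∅) := by
      ext y
      by_cases hm : m = 0 <;>
        simp [hp, hm, Set.mem_iUnion, not_exists]
    rw [this]
    refine (hFm m).union ?_
    by_cases hm : m = 0 <;> simp only [hm, if_true, if_false]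
    · exact (MeasurableSet.iUnion hFm).compl
    · exact MeasurableSet.empty
  set f : Fin d → Y → X := fun i y => g (Nat.find (htot y)) i y with hf
  have hfmeas : ∀ i, Measurable (f i) :=
    fun i => Measurable.find (fun m => hgm m i) hpm htot
  -- the good set
  refine ⟨⋃ m, F m, f, MeasurableSet.iUnion hFm, ?_, hfmeas, ?_⟩
  · refine measure_mono_null (fun y hy => ?_) hNnull
    by_contra hyN
    obtain ⟨m, hm⟩ := hFcov y hyN
    exact hy (Set.mem_iUnion.2 ⟨m, hm⟩)
  · intro y hy
    obtain ⟨m₀, hm₀⟩ := Set.mem_iUnion.1 hy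
    have hpfind : p (Nat.find (htot y)) y := Nat.find_spec (htot y)
    have hyF : y ∈ F (Nat.find (htot y)) := by
      rcases hpfind with h | ⟨_, hall⟩
      · exact h
      · exact absurd hm₀ (hall m₀)
    set m := Nat.find (htot y) with hm
    have hyG₀ : y ∈ G₀ := by
      by_cases h : Good (e m)
      · simp only [hF, if_pos h] at hyF; exact hyF.1
      · exfalso; simp only [hF, if_neg h] at hyF; exact hyF
    have hfd : (π ⁻¹' {y}).encard = d := hG₀fib y hyG₀
    have hfy : ∀ i, f i y ∈ B m i ∧ π (f i y) = y :=
      fun i => hg m i y (hsurjB m y hyF i)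
    have hinj : Function.Injective fun i => f i y := by
      intro a b hab
      have hGd : Good (e m) := by
        by_cases h : Good (e m)
        · exact h
        · exfalso; simp only [hF, if_neg h] at hyF; exact hyF
      have hab' : f a y = f b y := hab
      by_contra hne
      exact Set.disjoint_left.1 (hGd hne) (hfy a).1.1 (hab' ▸ (hfy b).1.1)
    refine ⟨hfd, fun i => (hfy i).2, hinj, ?_⟩
    have hfin : (π ⁻¹' {y}).Finite := Set.finite_of_encard_eq_coe hfd
    apply (hfin.eq_of_subset_of_encard_le' (by rintro x ⟨i, rfl⟩; exact (hfy i).2) ?_).symm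
    rw [hfd]
    have : (Set.range fun i => f i y).encard = (Set.univ : Set (Fin d)).encard := by
      rw [← Set.image_univ]; exact hinj.encard_image _
    rw [this, Set.encard_univ]; simp

open scoped Classical in
/-- If `ν` is ergodic with ν-a.e. fiber of finite cardinality `d`, then
the set function `A ↦ (1/d) ∫ |π⁻¹(y) ∩ A| dν(y)` defines a `T`-invariant Borel probability
measure lifting `ν`, whose disintegration over `ν` is a.e. uniform on the fiber, and this
canonical lift is the unique invariant lift of `ν` with a.e. uniform fiber disintegration. -/
theorem canonical_lift_exists_unique
    {X Y : Type*} [MetricSpace X] [CompactSpace X] [MetricSpace Y] [CompactSpace Y]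
    [MeasurableSpace X] [BorelSpace X] [MeasurableSpace Y] [BorelSpace Y]
    (T : X ≃ₜ X) (S : Y ≃ₜ Y) (π : X → Y)
    (hπc : Continuous π) (hπs : Function.Surjective π)
    (hcomm : π ∘ T = S ∘ π)
    (ν : Measure Y) [IsProbabilityMeasure ν] (hνerg : Ergodic S ν)
    (d : ℕ) (hd : 0 < d) (hfib : ∀ᵐ y ∂ν, (π ⁻¹' {y}).encard = d) :
    ∃ μ : Measure X,
      (IsProbabilityMeasure μ ∧ MeasurePreserving T μ μ ∧ μ.map π = ν ∧
        (∀ s : Set X, MeasurableSet s →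
          μ s = (∫⁻ y, ((π ⁻¹' {y} ∩ s).encard : ℝ≥0∞) ∂ν) / d) ∧
        HasUniformFiberDisintegration π ν d μ) ∧
      ∀ μ' : Measure X, IsProbabilityMeasure μ' → MeasurePreserving T μ' μ' →
        μ'.map π = ν → HasUniformFiberDisintegration π ν d μ' → μ' = μ := by
  have hπm : Measurable π := hπc.measurable
  haveI : Nonempty Y := by
    rcases isEmpty_or_nonempty Y with h | h
    · exfalso
      have h1 : ν Set.univ = 1 := measure_univ
      rw [Set.univ_eq_empty_iff.2 h, measure_empty] at h1
      exact zero_ne_one h1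
    · exact h
  haveI : Nonempty X := ⟨(hπs (Classical.arbitrary Y)).choose⟩
  have hSme : MeasurePreserving S ν ν := hνerg.toMeasurePreserving
  have hdne : (d : ℝ≥0∞) ≠ 0 := by exact_mod_cast Nat.cast_ne_zero.2 hd.ne'
  have hdnt : (d : ℝ≥0∞) ≠ ⊤ := ENNReal.natCast_ne_top d
  have hfibm : ∀ y : Y, MeasurableSet (π ⁻¹' {y}) :=
    fun y => (isClosed_singleton.preimage hπc).measurableSet
  obtain ⟨G, f, hGm, hGnull, hfm, hGprop⟩ := exists_sections π hπc ν d hd hfib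
  have hGae : ∀ᵐ y ∂ν, y ∈ G := by
    rw [ae_iff]
    convert hGnull using 2
    rfl
  -- the counting function
  set h : Set X → Y → ℝ≥0∞ := fun s y => ∑ i : Fin d, s.indicator (1 : X → ℝ≥0∞) (f i y)
    with hh
  have hhm : ∀ s : Set X, MeasurableSet s → Measurable (h s) := fun s hs =>
    Finset.measurable_sum _ fun i _ => (measurable_one.indicator hs).comp (hfm i)
  have hkey : ∀ y ∈ G, ∀ s : Set X, ((π ⁻¹' {y} ∩ s).encard : ℝ≥0∞) = h s y := by
    intro y hy s
    obtain ⟨hfd, hπf, hinj, hrange⟩ := hGprop y hy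
    have h1 : π ⁻¹' {y} ∩ s = (fun i => f i y) '' ((fun i => f i y) ⁻¹' s) := by
      rw [Set.image_preimage_eq_range_inter, hrange]
    rw [h1, hinj.encard_image]
    have h2 : ((fun i => f i y) ⁻¹' s) = ↑(Finset.univ.filter fun i => f i y ∈ s) := by
      ext i; simp
    rw [h2, Set.encard_coe_eq_coe_finsetCard]
    have h3 : h s y = ∑ i : Fin d, if f i y ∈ s then (1:ℝ≥0∞) else 0 := by
      refine Finset.sum_congr rfl fun i _ => ?_
      rw [Set.indicator_apply]; simp
    rw [h3, Finset.sum_boole]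
    exact_mod_cast rfl
  have hae : ∀ s : Set X,
      (fun y => ((π ⁻¹' {y} ∩ s).encard : ℝ≥0∞)) =ᵐ[ν] h s := by
    intro s
    filter_upwards [hGae] with y hy using hkey y hy s
  -- the measure
  set μ : Measure X := (d : ℝ≥0∞)⁻¹ • ∑ i : Fin d, ν.map (f i) with hμ
  have hμap : ∀ s : Set X, μ s = (d : ℝ≥0∞)⁻¹ * ∑ i : Fin d, (ν.map (f i)) s := by
    intro s
    rw [hμ, Measure.smul_apply, Measure.finset_sum_apply, smul_eq_mul]
  have hμap' : ∀ s : Set X, MeasurableSet s →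
      μ s = (d : ℝ≥0∞)⁻¹ * ∑ i : Fin d, ν ((f i) ⁻¹' s) := by
    intro s hs
    rw [hμap s]
    congr 1
    exact Finset.sum_congr rfl fun i _ => Measure.map_apply (hfm i) hs
  have hμint : ∀ s : Set X, MeasurableSet s →
      μ s = (d : ℝ≥0∞)⁻¹ * ∫⁻ y, h s y ∂ν := by
    intro s hs
    rw [hμap' s hs]
    congr 1
    calc ∑ i : Fin d, ν ((f i) ⁻¹' s)
        = ∑ i : Fin d, ∫⁻ y, s.indicator (1 : X → ℝ≥0∞) (f i y) ∂ν := by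
          refine Finset.sum_congr rfl fun i _ => ?_
          rw [← lintegral_indicator_one (hs.preimage (hfm i))]
          refine lintegral_congr fun y => ?_
          rw [Set.indicator_apply, Set.indicator_apply]
          simp [Set.mem_preimage]
      _ = ∫⁻ y, h s y ∂ν :=
          (lintegral_finset_sum _ fun i _ => (measurable_one.indicator hs).comp (hfm i)).symm
  have hform : ∀ s : Set X, MeasurableSet s →
      μ s = (∫⁻ y, ((π ⁻¹' {y} ∩ s).encard : ℝ≥0∞) ∂ν) / d := by
    intro s hs
    rw [hμint s hs, ENNReal.div_eq_inv_mul, lintegral_congr_ae (hae s)]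
  have hprob : IsProbabilityMeasure μ := by
    constructor
    rw [hμap' _ MeasurableSet.univ]
    simp only [Set.preimage_univ, measure_univ]
    rw [Finset.sum_const, Finset.card_univ, Fintype.card_fin, nsmul_eq_mul, mul_one]
    exact ENNReal.inv_mul_cancel hdne hdnt
  have hmap : μ.map π = ν := by
    refine Measure.ext fun t ht => ?_
    rw [Measure.map_apply hπm ht, hμap' _ (ht.preimage hπm)]
    have h1 : ∀ i : Fin d, ν ((f i) ⁻¹' (π ⁻¹' t)) = ν t := by
      intro i
      refine measure_congr ?_
      rw [Filter.eventuallyEq_set]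
      filter_upwards [hGae] with y hy
      simp [Set.mem_preimage, (hGprop y hy).2.1 i]
    rw [Finset.sum_congr rfl fun i _ => h1 i, Finset.sum_const, Finset.card_univ,
      Fintype.card_fin, nsmul_eq_mul, ← mul_assoc, ENNReal.inv_mul_cancel hdne hdnt, one_mul]
  -- T-invariance
  have hTm : Measurable (T : X → X) := T.continuous.measurable
  have hcomm' : ∀ z : X, π (T z) = S (π z) := fun z => congrFun hcomm z
  have hTpres : MeasurePreserving T μ μ := by
    refine ⟨hTm, ?_⟩
    refine Measure.ext fun t ht => ?_
    rw [Measure.map_apply hTm ht, hform _ (ht.preimage hTm), hform t ht]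
    congr 1
    have him : ∀ y : Y, (π ⁻¹' {y} ∩ (T : X → X) ⁻¹' t).encard = (π ⁻¹' {S y} ∩ t).encard := by
      intro y
      have h1 : (T : X → X) '' (π ⁻¹' {y} ∩ (T : X → X) ⁻¹' t) = π ⁻¹' {S y} ∩ t := by
        rw [Set.image_inter T.injective, Set.image_preimage_eq _ T.surjective]
        congr 1
        ext x
        simp only [Set.mem_image, Set.mem_preimage, Set.mem_singleton_iff]
        constructor
        · rintro ⟨z, hz, rfl⟩
          rw [hcomm' z, hz]
        · intro hx
          refine ⟨T.symm x, ?_, T.apply_symm_apply x⟩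
          have := hcomm' (T.symm x)
          rw [T.apply_symm_apply] at this
          exact S.injective (this ▸ hx)
      rw [← h1, T.injective.encard_image]
    have hSG : ∀ᵐ y ∂ν, S y ∈ G := by
      rw [ae_iff]
      have : {y | ¬ S y ∈ G} = (S : Y → Y) ⁻¹' Gᶜ := rfl
      rw [this, hSme.measure_preimage hGm.compl.nullMeasurableSet]
      exact hGnull
    calc ∫⁻ y, ((π ⁻¹' {y} ∩ (T : X → X) ⁻¹' t).encard : ℝ≥0∞) ∂ν
        = ∫⁻ y, ((π ⁻¹' {S y} ∩ t).encard : ℝ≥0∞) ∂ν := by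
          refine lintegral_congr fun y => ?_; rw [him y]
      _ = ∫⁻ y, h t (S y) ∂ν := by
          refine lintegral_congr_ae ?_
          filter_upwards [hSG] with y hy using hkey (S y) hy t
      _ = ∫⁻ y, h t y ∂ν := hSme.lintegral_comp (hhm t ht)
      _ = ∫⁻ y, ((π ⁻¹' {y} ∩ t).encard : ℝ≥0∞) ∂ν := (lintegral_congr_ae (hae t)).symm
  -- the kernel
  set K : Y → Measure X := fun y => (d : ℝ≥0∞)⁻¹ • ∑ i : Fin d, Measure.dirac (f i y)
    with hK
  have hKapp : ∀ s : Set X, MeasurableSet s → ∀ y, K y s = (d : ℝ≥0∞)⁻¹ * h s y := by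
    intro s hs y
    rw [hK]
    simp only [Measure.smul_apply, Measure.finset_sum_apply, smul_eq_mul]
    congr 1
    exact Finset.sum_congr rfl fun i _ => Measure.dirac_apply' _ hs
  have hdisint : HasUniformFiberDisintegration π ν d μ := by
    refine ⟨K, fun s hs => ⟨?_, ?_⟩, ?_⟩
    · have : (fun y => K y s) = fun y => (d : ℝ≥0∞)⁻¹ * h s y := funext (hKapp s hs)
      rw [this]
      exact (hhm s hs).const_mul _
    · rw [hμint s hs, ← lintegral_const_mul _ (hhm s hs)]
      exact lintegral_congr fun y => (hKapp s hs y).symm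
    · filter_upwards [hGae] with y hy
      obtain ⟨hfd, hπf, hinj, hrange⟩ := hGprop y hy
      constructor
      · rw [hKapp _ (hfibm y) y]
        have : h (π ⁻¹' {y}) y = d := by
          show (∑ i : Fin d, (π ⁻¹' {y}).indicator (1 : X → ℝ≥0∞) (f i y)) = (d : ℝ≥0∞)
          have : ∀ i : Fin d, (π ⁻¹' {y}).indicator (1 : X → ℝ≥0∞) (f i y) = 1 := by
            intro i
            rw [Set.indicator_of_mem (by simp [hπf i]) _]
            rfl
          rw [Finset.sum_congr rfl fun i _ => this i, Finset.sum_const, Finset.card_univ,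
            Fintype.card_fin, nsmul_eq_mul, mul_one]
        rw [this]
        exact ENNReal.inv_mul_cancel hdne hdnt
      · intro x hx
        rw [hKapp _ (measurableSet_singleton x) y]
        have hxr : x ∈ Set.range fun i => f i y := by
          rw [← hrange]; exact hx
        obtain ⟨i₀, hi₀⟩ := hxr
        have hone : h {x} y = 1 := by
          show (∑ i : Fin d, ({x} : Set X).indicator (1 : X → ℝ≥0∞) (f i y)) = 1
          have heq : ∀ i : Fin d, ({x} : Set X).indicator (1 : X → ℝ≥0∞) (f i y)
              = if i = i₀ then 1 else 0 := by
            intro i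
            rw [Set.indicator_apply]
            congr 1
            simp only [Set.mem_singleton_iff, eq_iff_iff]
            constructor
            · intro hfi
              exact hinj (hfi.trans hi₀.symm : (fun i => f i y) i = (fun i => f i y) i₀)
            · rintro rfl; exact hi₀
          rw [Finset.sum_congr rfl fun i _ => heq i]
          rw [Finset.sum_ite_eq' Finset.univ i₀ (fun _ => (1:ℝ≥0∞))]
          simp
        rw [hone, mul_one]
  refine ⟨μ, ⟨hprob, hTpres, hmap, hform, hdisint⟩, ?_⟩
  -- uniqueness
  rintro μ' hμ'p hμ'T hμ'map ⟨K', hK'meas, hK'ae⟩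
  refine Measure.ext fun s hs => ?_
  have hKuniv : ∀ᵐ y ∂ν, K' y Set.univ = 1 := by
    have hint : ∫⁻ y, K' y Set.univ ∂ν = 1 := by
      rw [← (hK'meas _ MeasurableSet.univ).2]
      exact measure_univ
    have hge : ∀ᵐ y ∂ν, 1 ≤ K' y Set.univ := by
      filter_upwards [hK'ae] with y hy
      rw [← hy.1]
      exact measure_mono (Set.subset_univ _)
    have hm := (hK'meas _ MeasurableSet.univ).1
    have hone : ∫⁻ (_ : Y), (1:ℝ≥0∞) ∂ν = 1 := by simp
    have hsub : ∫⁻ y, (K' y Set.univ - 1) ∂ν = 0 := by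
      rw [lintegral_sub measurable_const (by rw [hone]; exact ENNReal.one_ne_top) hge, hint, hone,
        tsub_self]
    have h0 := (lintegral_eq_zero_iff (hm.sub measurable_const)).1 hsub
    filter_upwards [h0, hge] with y hy0 hy1
    have hle : K' y Set.univ ≤ 1 := tsub_eq_zero_iff_le.1 (by simpa using hy0)
    exact le_antisymm hle hy1
  have hKs : ∀ᵐ y ∂ν, K' y s = ((π ⁻¹' {y} ∩ s).encard : ℝ≥0∞) * (d : ℝ≥0∞)⁻¹ := by
    filter_upwards [hK'ae, hKuniv, hfib] with y hy hu hfd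
    have hcompl : K' y (π ⁻¹' {y})ᶜ = 0 := by
      have hadd : K' y (π ⁻¹' {y}) + K' y (π ⁻¹' {y})ᶜ = K' y Set.univ :=
        measure_add_measure_compl (hfibm y)
      rw [hy.1, hu] at hadd
      exact (ENNReal.add_right_inj (a := 1) (by simp)).1 (by rw [hadd, add_zero])
    have hsplit : K' y s = K' y (s ∩ π ⁻¹' {y}) := by
      have h1 := measure_inter_add_diff (μ := K' y) s (hfibm y)
      have hdiff : K' y (s \ π ⁻¹' {y}) = 0 :=
        measure_mono_null (fun x hx => hx.2) hcompl
      rw [hdiff, add_zero] at h1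
      exact h1.symm
    have hfin : (π ⁻¹' {y}).Finite := Set.finite_of_encard_eq_coe hfd
    have hfin' : (s ∩ π ⁻¹' {y}).Finite := hfin.subset Set.inter_subset_right
    have hset : s ∩ π ⁻¹' {y} = ⋃ x ∈ hfin'.toFinset, ({x} : Set X) := by
      ext x; simp
    rw [hsplit, hset, measure_biUnion_finset ?_ (fun x _ => measurableSet_singleton x)]
    · have hval : ∀ x ∈ hfin'.toFinset, K' y {x} = (d : ℝ≥0∞)⁻¹ := by
        intro x hxm
        exact hy.2 x ((hfin'.mem_toFinset.1 hxm).2 : π x = y)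
      rw [Finset.sum_congr rfl hval, Finset.sum_const, nsmul_eq_mul]
      congr 1
      have : (π ⁻¹' {y} ∩ s).encard = (hfin'.toFinset.card : ℕ∞) := by
        rw [Set.inter_comm, hfin'.encard_eq_coe_toFinset_card]
      rw [this]
      exact_mod_cast rfl
    · intro a ha b hb hab
      simp only [Set.disjoint_singleton_left, Set.mem_singleton_iff]
      exact hab
  have hμ's : μ' s = ∫⁻ y, ((π ⁻¹' {y} ∩ s).encard : ℝ≥0∞) * (d : ℝ≥0∞)⁻¹ ∂ν := by
    rw [(hK'meas s hs).2]
    exact lintegral_congr_ae hKs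
  rw [hμ's, hform s hs]
  have : ∫⁻ y, ((π ⁻¹' {y} ∩ s).encard : ℝ≥0∞) * (d : ℝ≥0∞)⁻¹ ∂ν
      = ∫⁻ y, h s y * (d : ℝ≥0∞)⁻¹ ∂ν := by
    refine lintegral_congr_ae ?_
    filter_upwards [hGae] with y hy
    rw [hkey y hy s]
  rw [this, lintegral_mul_const _ (hhm s hs), lintegral_congr_ae (hae s),
    ENNReal.div_eq_inv_mul, mul_comm]
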